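/- arXiv:2108.09236 — 3 statements merged into one kernel-verified Lean document; each statement's English description precedes it below -/
import Mathlib

section
/- Let G be a residually finite group and H a maximal abelian subgroup of G. Then H is separable in G; that is, for every g ∈ G with g ∉ H, there exists a finite-index normal subgroup N of G such that g ∉ HN. -/
open scoped Pointwise

/-- `G` is residually finite: every non-identity element avoids some
finite-index normal subgroup. -/
def ResiduallyFinite (G : Type*) [Group G] : Prop :=
  ∀ g : G, g ≠ 1 → ∃ N : Subgroup G, N.Normal ∧ N.FiniteIndex ∧ g ∉ N

/-- A subgroup `H` is separable in `G`: for every `g ∉ H` there is a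
finite-index normal subgroup `N` with `g ∉ HN`. -/
def SubgroupSeparable {G : Type*} [Group G] (H : Subgroup G) : Prop :=
  ∀ g : G, g ∉ H → ∃ N : Subgroup G, N.Normal ∧ N.FiniteIndex ∧
    g ∉ (H : Set G) * (N : Set G)

/-- A maximal abelian subgroup of a residually finite group is separable. -/
theorem stmt_0 {G : Type*} [Group G] (hRF : ResiduallyFinite G) (H : Subgroup G)
    (hab : ∀ x ∈ H, ∀ y ∈ H, x * y = y * x)
    (hmax : ∀ K : Subgroup G, (∀ x ∈ K, ∀ y ∈ K, x * y = y * x) → H ≤ K → K = H) :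
    SubgroupSeparable H := by
  intro g hg
  -- find x ∈ H not commuting with g
  have hx : ∃ x ∈ H, g * x * g⁻¹ * x⁻¹ ≠ 1 := by
    by_contra hc
    push_neg at hc
    have hcomm : ∀ x ∈ H, Commute g x := by
      intro x hxH
      exact commutatorElement_eq_one_iff_commute.mp
        (by rw [commutatorElement_def]; exact hc x hxH)
    set K := Subgroup.closure ((H : Set G) ∪ {g}) with hK
    have hgen : ∀ a ∈ ((H : Set G) ∪ {g}), ∀ b ∈ ((H : Set G) ∪ {g}), Commute a b := by
      rintro a (ha | ha) b (hb | hb)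
      · exact hab a ha b hb
      · simp only [Set.mem_singleton_iff] at hb; subst hb
        exact (hcomm a ha).symm
      · simp only [Set.mem_singleton_iff] at ha; subst ha
        exact hcomm b hb
      · simp only [Set.mem_singleton_iff] at ha hb; subst ha; subst hb; rfl
    have hKab : ∀ x ∈ K, ∀ y ∈ K, x * y = y * x := by
      intro x hxK y hyK
      induction hxK, hyK using Subgroup.closure_induction₂ with
      | mem a b ha hb => exact hgen a ha b hb
      | one_left a ha => exact Commute.one_left a
      | one_right a ha => exact Commute.one_right a
      | mul_left a b c _ _ _ h1 h2 => exact Commute.mul_left h1 h2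
      | mul_right a b c _ _ _ h1 h2 => exact Commute.mul_right h1 h2
      | inv_left a b _ _ h => exact Commute.inv_left h
      | inv_right a b _ _ h => exact Commute.inv_right h
    have hle : H ≤ K := fun a ha => Subgroup.subset_closure (Or.inl ha)
    have hKH : K = H := hmax K hKab hle
    exact hg (hKH ▸ Subgroup.subset_closure (Or.inr rfl))
  obtain ⟨x, hxH, hne⟩ := hx
  obtain ⟨N, hNn, hNfi, hgN⟩ := hRF _ hne
  refine ⟨N, hNn, hNfi, ?_⟩
  rintro ⟨h, hh, n, hn, rfl⟩
  apply hgN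
  have hcomm : h * x = x * h := hab h hh x hxH
  have hm : n * (x * n⁻¹ * x⁻¹) ∈ N := mul_mem hn (by
    have := (Subgroup.Normal.conj_mem hNn n⁻¹ (inv_mem hn) x)
    simpa [mul_assoc] using this)
  have key : h * n * x * (h * n)⁻¹ * x⁻¹ = h * (n * (x * n⁻¹ * x⁻¹)) * h⁻¹ := by
    have hc' : h⁻¹ * x⁻¹ = x⁻¹ * h⁻¹ := by
      rw [← mul_inv_rev, ← mul_inv_rev, hcomm]
    calc h * n * x * (h * n)⁻¹ * x⁻¹ = h * n * x * n⁻¹ * (h⁻¹ * x⁻¹) := by group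
      _ = h * n * x * n⁻¹ * (x⁻¹ * h⁻¹) := by rw [hc']
      _ = h * (n * (x * n⁻¹ * x⁻¹)) * h⁻¹ := by group
  rw [key]
  exact Subgroup.Normal.conj_mem hNn _ hm h
end

section
/- Let G be a residually finite group and H a maximal nilpotent subgroup of G. Then H is separable in G. -/
open scoped Pointwise

/-- Surjective homomorphisms map the lower central series onto the lower central series. -/
lemma aux_lcs_map {A B : Type*} [Group A] [Group B] (f : A →* B)
    (hf : Function.Surjective f) :
    ∀ n, Subgroup.map f ((⊤ : Subgroup A).lowerCentralSeries n) = (⊤ : Subgroup B).lowerCentralSeries n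
  | 0 => by
    simpa [lowerCentralSeries] using
      (MonoidHom.range_eq_map f ▸ f.range_eq_top_of_surjective hf)
  | n + 1 => by
    show Subgroup.map f ⁅(⊤ : Subgroup A).lowerCentralSeries n, (⊤ : Subgroup A)⁆ =
      ⁅(⊤ : Subgroup B).lowerCentralSeries n, (⊤ : Subgroup B)⁆
    rw [Subgroup.map_commutator, aux_lcs_map f hf n, ← MonoidHom.range_eq_map,
      f.range_eq_top_of_surjective hf]

/-- A maximal nilpotent subgroup of a residually finite group is separable. -/
theorem stmt_1 {G : Type*} [Group G] (hRF : ResiduallyFinite G) (H : Subgroup G)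
    (hnilp : Group.IsNilpotent H)
    (hmax : ∀ K : Subgroup G, Group.IsNilpotent K → H ≤ K → K = H) :
    SubgroupSeparable H := by
  intro g hg
  by_contra hcon
  push_neg at hcon
  obtain ⟨c, hc⟩ := nilpotent_iff_lowerCentralSeries.mp hnilp
  set K : Subgroup G := H ⊔ Subgroup.zpowers g with hK
  have hHK : H ≤ K := le_sup_left
  have hgK : g ∈ K := Subgroup.mem_sup_right (Subgroup.mem_zpowers g)
  have key : (⊤ : Subgroup K).lowerCentralSeries c = ⊥ := by
    rw [eq_bot_iff]
    intro x hx
    simp only [Subgroup.mem_bot]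
    by_contra hx1
    have hx1' : (x : G) ≠ 1 := by
      simpa using hx1
    obtain ⟨N, hN, hNfi, hxN⟩ := hRF x hx1'
    obtain ⟨h, hh, n, hn, hgn⟩ := hcon N hN hNfi
    let π : G →* G ⧸ N := QuotientGroup.mk' N
    have hπn : π n = 1 := (QuotientGroup.eq_one_iff n).mpr hn
    have hπg : π g ∈ H.map π := ⟨h, hh, by rw [← hgn, map_mul, hπn, mul_one]⟩
    have hKle : K.map π ≤ H.map π := by
      rw [hK, Subgroup.map_sup]
      apply sup_le le_rfl
      rw [Subgroup.map_le_iff_le_comap, Subgroup.zpowers_le]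
      exact hπg
    -- the image of H in the quotient has trivial c-th lower central series
    have hQ : (⊤ : Subgroup (H.map π)).lowerCentralSeries c = ⊥ := by
      rw [← aux_lcs_map (π.subgroupMap H) (π.subgroupMap_surjective H) c, hc,
        Subgroup.map_bot]
    -- map K into H.map π
    let ψ : K →* H.map π :=
      (π.comp K.subtype).codRestrict (H.map π) (fun k => hKle ⟨k, k.2, rfl⟩)
    have hψx : ψ x = 1 := by
      have := lowerCentralSeries.map ψ c (Subgroup.mem_map_of_mem ψ hx)
      rwa [hQ, Subgroup.mem_bot] at this
    have hπx : π (x : G) = 1 := congrArg Subtype.val hψx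
    exact hxN ((QuotientGroup.eq_one_iff _).mp hπx)
  have hKnil : Group.IsNilpotent K := nilpotent_iff_lowerCentralSeries.mpr ⟨c, key⟩
  have := hmax K hKnil hHK
  exact hg (this ▸ hgK)
end

section
/- Let G act on a tree T and let A ≤ G be an abelian subgroup containing an element g ≠ 1 whose fixed-point set in T is exactly one vertex v. If the stabilizer G_v of v satisfies: every abelian subgroup of G_v containing A ∩ G_v equals A ∩ G_v, and A ∩ G_v is the stabilizer-intersection A (i.e., A ≤ G_v), then A is a maximal abelian subgroup of G. -/
/-- Let `G` act on a tree `T` and let `A ≤ G` be an abelian subgroup containing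
an element `g ≠ 1` whose fixed-point set in `T` is exactly `{v}`.  If
`A ≤ G_v` and every abelian subgroup of the stabilizer `G_v` containing `A`
equals `A` (i.e. `A` is maximal abelian in `G_v`), then `A` is a maximal
abelian subgroup of `G`. -/
theorem stmt_11 {G V : Type*} [Group G] [MulAction G V]
    (T : SimpleGraph V) (hT : T.IsTree)
    (hact : ∀ (g : G) (a b : V), T.Adj a b → T.Adj (g • a) (g • b))
    (A : Subgroup G) (hab : ∀ x ∈ A, ∀ y ∈ A, x * y = y * x)
    (v : V) (g : G) (hgA : g ∈ A) (hg : g ≠ 1)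
    (hfix : {x : V | g • x = x} = {v})
    (hAv : A ≤ MulAction.stabilizer G v)
    (hmaxv : ∀ B : Subgroup G, B ≤ MulAction.stabilizer G v →
      (∀ x ∈ B, ∀ y ∈ B, x * y = y * x) → A ≤ B → B = A) :
    ∀ B : Subgroup G, (∀ x ∈ B, ∀ y ∈ B, x * y = y * x) → A ≤ B → B = A := by
  intro B hBab hAB
  refine hmaxv B ?_ hBab hAB
  intro b hb
  have hgv : g • v = v := hAv hgA
  have hcomm : g * b = b * g := hBab g (hAB hgA) b hb
  have : g • (b • v) = b • v := by
    rw [smul_smul, hcomm, ← smul_smul, hgv]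
  have := Set.mem_singleton_iff.mp (hfix ▸ this : b • v ∈ {v})
  simpa [MulAction.mem_stabilizer_iff] using this
end
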